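/- Let D > 0 and σ = D/β. For each positive integer m define E_m(t,⟦y⟧) on (0,∞) × (ℚ_p/ℤ_p) by: E_m(t,⟦y⟧) = ((p^{mb}/(p^{mb}−1))·(1 − β·|⟦y⟧|^b·p^{−mb}))^{⌊tσp^{mb}⌋} if 0 < |⟦y⟧| ≤ p^m, E_m(t,⟦0⟧) = 1, and E_m(t,⟦y⟧) = 0 if |⟦y⟧| > p^m; and define g(t,⟦y⟧) = exp(−D(|⟦y⟧|^b − β^{−1})t) for ⟦y⟧ ≠ ⟦0⟧ and g(t,⟦0⟧) = 1. Then for every t > 0, the sum over the countable group ℚ_p/ℤ_p satisfies Σ_{⟦y⟧ ∈ ℚ_p/ℤ_p} |E_m(t,⟦y⟧) − g(t,⟦y⟧)| → 0 as m → ∞. -/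

import Mathlib

open scoped Classical

/-- β = (p^{b+1} − 1)/(p^b (p − 1)) -/
noncomputable def betaC (p : ℕ) (b : ℝ) : ℝ :=
  ((p : ℝ) ^ (b + 1) - 1) / ((p : ℝ) ^ b * ((p : ℝ) - 1))

/-- The ring of `p`-adic integers `ℤ_p` as an additive subgroup of `ℚ_p`. -/
noncomputable def ZpSub (p : ℕ) [Fact p.Prime] : AddSubgroup ℚ_[p] where
  carrier := {x : ℚ_[p] | ‖x‖ ≤ 1}
  zero_mem' := by simp
  add_mem' := fun ha hb => le_trans (Padic.nonarchimedean _ _) (max_le ha hb)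
  neg_mem' := fun ha => by simpa using ha

section StmtAux

open Filter Real

set_option maxHeartbeats 1000000

lemma stmt18_unif_bound {Q β x P A : ℝ} (hQ : 1 < Q) (hβ : 1 < β) (hβ2 : β ≤ 2 - Q⁻¹)
    (hx : 0 < x) (hP3 : 3 ≤ P) (hxP : 2 ≤ x * P)
    (hP4 : (1 - Q⁻¹) * (P / (P - 1)) ≤ 1 - Q⁻¹ / 2)
    (hA1 : Q ≤ A) (hA2 : A ≤ P) :
    |((P / (P - 1)) * (1 - β * A / P)) ^ ⌊x * P⌋₊|
      ≤ Real.exp (-(min (x * (β - Q⁻¹) / 2)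
          (x / 2 * (-Real.log (max (3/4) (1 - Q⁻¹/2)))) * A)) := by
  set q₀ : ℝ := max (3/4) (1 - Q⁻¹/2) with hq₀def
  set c₁ : ℝ := x * (β - Q⁻¹) / 2 with hc₁def
  set c₂ : ℝ := x / 2 * (-Real.log q₀) with hc₂def
  set N : ℕ := ⌊x * P⌋₊ with hNdef
  have hP0 : (0:ℝ) < P := by linarith
  have hP1 : (1:ℝ) < P := by linarith
  have hPm1 : (0:ℝ) < P - 1 := by linarith
  have hQ0 : (0:ℝ) < Q := by linarith
  have hQi0 : (0:ℝ) < Q⁻¹ := by positivity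
  have hQi1 : Q⁻¹ < 1 := by rw [inv_lt_one_iff₀]; right; exact hQ
  have hA0 : (0:ℝ) < A := by linarith
  have hQiA : 1 ≤ Q⁻¹ * A := by
    calc (1:ℝ) = Q⁻¹ * Q := by field_simp
    _ ≤ Q⁻¹ * A := by nlinarith
  have hβA : 1 < β * A := by nlinarith
  have hN : x * P / 2 ≤ (N : ℝ) := by
    have h1 : x * P - 1 < (N : ℝ) := Nat.sub_one_lt_floor (x * P)
    linarith
  have hbase_eq : (P / (P - 1)) * (1 - β * A / P) = 1 - (β * A - 1)/(P - 1) := by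
    field_simp
    ring
  have hq₀0 : (0:ℝ) < q₀ := lt_of_lt_of_le (by norm_num) (le_max_left _ _)
  have hq₀1 : q₀ < 1 := by
    rw [hq₀def, max_lt_iff]
    exact ⟨by norm_num, by linarith⟩
  have hlogq₀ : Real.log q₀ < 0 := Real.log_neg hq₀0 hq₀1
  have hc₂0 : 0 < c₂ := by
    rw [hc₂def]
    have : 0 < -Real.log q₀ := by linarith
    positivity
  have hc'₁ : min c₁ c₂ * A ≤ c₁ * A := mul_le_mul_of_nonneg_right (min_le_left _ _) hA0.le
  have hc'₂ : min c₁ c₂ * A ≤ c₂ * A := mul_le_mul_of_nonneg_right (min_le_right _ _) hA0.le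
  rw [abs_pow, hbase_eq]
  set u : ℝ := (β * A - 1)/(P - 1) with hudef
  have hu0 : 0 < u := div_pos (by linarith) hPm1
  by_cases hcase : β * A ≤ P / 2
  · -- small A case
    have hu12 : u ≤ 1/2 := by
      rw [hudef, div_le_iff₀ hPm1]
      linarith
    have hbnn : (0:ℝ) ≤ 1 - u := by linarith
    rw [abs_of_nonneg hbnn]
    have hle : 1 - u ≤ Real.exp (-u) := by
      have := Real.add_one_le_exp (-u)
      linarith
    calc (1 - u) ^ N ≤ Real.exp (-u) ^ N := pow_le_pow_left₀ hbnn hle N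
      _ = Real.exp ((N:ℝ) * (-u)) := (Real.exp_nat_mul _ N).symm
      _ ≤ Real.exp (-(min c₁ c₂ * A)) := by
          apply Real.exp_le_exp.mpr
          have step1 : c₁ * A ≤ x / 2 * (β * A - 1) := by
            rw [hc₁def]
            nlinarith
          have step2 : x / 2 * (β * A - 1) ≤ x * P / 2 * u := by
            have he : x * P / 2 * u = (x * P / 2 * (β * A - 1))/(P - 1) := by
              rw [hudef]; ring
            rw [he, le_div_iff₀ hPm1]
            nlinarith
          have step3 : x * P / 2 * u ≤ (N:ℝ) * u := mul_le_mul_of_nonneg_right hN hu0.le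
          linarith
  · -- large A case
    push_neg at hcase
    have hup : u ≥ 1/4 := by
      rw [hudef, ge_iff_le, le_div_iff₀ hPm1]
      nlinarith
    have hlow : u ≤ 2 - Q⁻¹/2 := by
      have hP4' : (1 - Q⁻¹) * P ≤ (1 - Q⁻¹/2) * (P - 1) := by
        calc (1 - Q⁻¹) * P = ((1 - Q⁻¹) * (P/(P-1))) * (P - 1) := by field_simp
          _ ≤ (1 - Q⁻¹/2) * (P - 1) := mul_le_mul_of_nonneg_right hP4 hPm1.le
      rw [hudef, div_le_iff₀ hPm1]
      nlinarith [mul_le_mul_of_nonneg_left hA2 (by linarith : (0:ℝ) ≤ β)]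
    have habs : |1 - u| ≤ q₀ := by
      rw [abs_le]
      constructor
      · have : 1 - Q⁻¹/2 ≤ q₀ := le_max_right _ _
        linarith
      · have : (3:ℝ)/4 ≤ q₀ := le_max_left _ _
        linarith
    calc |1 - u| ^ N ≤ q₀ ^ N := pow_le_pow_left₀ (abs_nonneg _) habs N
      _ = Real.exp ((N:ℝ) * Real.log q₀) := by
          rw [← Real.log_pow, Real.exp_log (pow_pos hq₀0 N)]
      _ ≤ Real.exp (-(min c₁ c₂ * A)) := by
          apply Real.exp_le_exp.mpr
          have hxA : x * A / 2 ≤ (N:ℝ) := by nlinarith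
          have h1 : (N:ℝ) * Real.log q₀ ≤ (x * A / 2) * Real.log q₀ :=
            mul_le_mul_of_nonpos_right hxA hlogq₀.le
          have h2 : (x * A / 2) * Real.log q₀ = -(c₂ * A) := by
            rw [hc₂def]; ring
          linarith

lemma stmt18_pointwise_lim {β x A : ℝ} (hβ : 1 < β) (hx : 0 < x) (hA : 1 < A)
    {P : ℕ → ℝ} (hP : Tendsto P atTop atTop) :
    Tendsto (fun m => ((P m / (P m - 1)) * (1 - β * A / P m)) ^ ⌊x * P m⌋₊)
      atTop (nhds (Real.exp (-(x * (β * A - 1))))) := by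
  have hβA : 0 < β * A - 1 := by nlinarith
  set u : ℕ → ℝ := fun m => (β * A - 1)/(P m - 1) with hu
  have hPm1 : Tendsto (fun m => P m - 1) atTop atTop :=
    tendsto_atTop_add_const_right _ (-1) hP
  have hu0 : Tendsto u atTop (nhds 0) :=
    Tendsto.div_atTop tendsto_const_nhds hPm1
  have hev : ∀ᶠ m in atTop, 1 < P m := hP.eventually_gt_atTop 1
  have hu_pos : ∀ᶠ m in atTop, 0 < u m := by
    filter_upwards [hPm1.eventually_gt_atTop 0] with m hm
    exact div_pos hβA hm
  have hderiv : HasDerivAt (fun y : ℝ => Real.log (1 - y)) (-1) 0 := by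
    have h1 : HasDerivAt (fun y : ℝ => 1 - y) (-1) 0 := (hasDerivAt_id 0).const_sub 1
    have h2 := (Real.hasDerivAt_log (by norm_num : (1:ℝ) - 0 ≠ 0)).comp 0 h1
    simp at h2
    exact h2
  have hslope := hasDerivAt_iff_tendsto_slope.mp hderiv
  have hu_ne : Tendsto u atTop (nhdsWithin 0 {(0:ℝ)}ᶜ) := by
    rw [tendsto_nhdsWithin_iff]
    exact ⟨hu0, hu_pos.mono fun m hm => ne_of_gt hm⟩
  have hlogratio : Tendsto (fun m => slope (fun y : ℝ => Real.log (1 - y)) 0 (u m))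
      atTop (nhds (-1)) := hslope.comp hu_ne
  have hfloor : Tendsto (fun m => (⌊x * P m⌋₊ : ℝ) / (x * P m)) atTop (nhds 1) :=
    tendsto_nat_floor_div_atTop.comp (Tendsto.const_mul_atTop hx hP)
  have hratio : Tendsto (fun m => P m / (P m - 1)) atTop (nhds 1) := by
    have h1 : Tendsto (fun m => 1 + 1/(P m - 1)) atTop (nhds (1 + 0)) :=
      tendsto_const_nhds.add (Tendsto.div_atTop tendsto_const_nhds hPm1)
    rw [add_zero] at h1
    apply h1.congr'
    filter_upwards [hev] with m hm
    have hPm10 : P m - 1 ≠ 0 := by intro h; rw [sub_eq_zero] at h; exact (by linarith : False)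
    field_simp
    ring
  have hNu : Tendsto (fun m => (⌊x * P m⌋₊ : ℝ) * u m) atTop (nhds (x * (β * A - 1))) := by
    have hmul : Tendsto (fun m => ((⌊x * P m⌋₊ : ℝ) / (x * P m)) * (P m / (P m - 1))
        * (x * (β * A - 1))) atTop (nhds (1 * 1 * (x * (β * A - 1)))) :=
      (hfloor.mul hratio).mul_const _
    rw [one_mul, one_mul] at hmul
    apply hmul.congr'
    filter_upwards [hev] with m hm
    have hPm0 : P m ≠ 0 := by linarith
    have hPm10 : P m - 1 ≠ 0 := by intro h; rw [sub_eq_zero] at h; exact (by linarith : False)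
    rw [hu]
    field_simp
  have hNlog : Tendsto (fun m => (⌊x * P m⌋₊ : ℝ) * Real.log (1 - u m)) atTop
      (nhds (-(x * (β * A - 1)))) := by
    have hmul := hNu.mul hlogratio
    rw [show x * (β * A - 1) * (-1) = -(x * (β * A - 1)) by ring] at hmul
    apply hmul.congr'
    filter_upwards [hu_pos] with m hm
    have : slope (fun y : ℝ => Real.log (1 - y)) 0 (u m) = Real.log (1 - u m) / u m := by
      rw [slope_def_field]
      simp [div_eq_inv_mul]
    rw [this]
    field_simp
  have hfinal : Tendsto (fun m => Real.exp ((⌊x * P m⌋₊ : ℝ) * Real.log (1 - u m))) atTop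
      (nhds (Real.exp (-(x * (β * A - 1))))) := (Real.continuous_exp.tendsto _).comp hNlog
  apply hfinal.congr'
  filter_upwards [hu0.eventually (gt_mem_nhds (by norm_num : (0:ℝ) < 1/2)), hu_pos, hev]
    with m hm1 hm2 hm3
  have hbpos : 0 < 1 - u m := by
    have : u m < 1/2 := hm1
    linarith
  have hbase_eq : (P m / (P m - 1)) * (1 - β * A / P m) = 1 - u m := by
    have hPm0 : P m ≠ 0 := by linarith
    have hPm10 : P m - 1 ≠ 0 := by intro h; rw [sub_eq_zero] at h; exact (by linarith : False)
    rw [hu]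
    field_simp
    ring
  rw [hbase_eq, ← Real.log_pow, Real.exp_log (pow_pos hbpos _)]

lemma stmt18_summable_bound {p : ℕ} [Fact p.Prime] (absQ : (ℚ_[p] ⧸ ZpSub p) → ℝ)
    (habsQ : ∀ y : ℚ_[p], absQ (QuotientAddGroup.mk y) = if ‖y‖ ≤ 1 then 0 else ‖y‖)
    (b c K : ℝ) (hb : 0 < b) (hc : 0 < c) (hK : 0 ≤ K) :
    Summable (fun q : ℚ_[p] ⧸ ZpSub p =>
      if absQ q = 0 then (0:ℝ) else K * Real.exp (-(c * absQ q ^ b))) := by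
  have hp2 : 2 ≤ p := (Fact.out : p.Prime).two_le
  have hp0 : (0:ℝ) < p := by positivity
  have hplt : (1:ℝ) < p := by exact_mod_cast (Fact.out : p.Prime).one_lt
  set Q : ℝ := (p:ℝ) ^ b with hQdef
  have hQ1 : 1 < Q := Real.one_lt_rpow_iff_of_pos hp0 |>.mpr (Or.inl ⟨hplt, hb⟩)
  have hQ0 : 0 < Q := lt_trans one_pos hQ1
  set bound : (ℚ_[p] ⧸ ZpSub p) → ℝ :=
    fun q => if absQ q = 0 then (0:ℝ) else K * Real.exp (-(c * absQ q ^ b)) with hbound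
  set S : Set (ℚ_[p] ⧸ ZpSub p) := {q | absQ q ≠ 0} with hS
  set lev : (ℚ_[p] ⧸ ZpSub p) → ℕ := fun q => (-(Quotient.out q).valuation).toNat with hlev
  have hlev_spec : ∀ q ∈ S, 1 ≤ lev q ∧ absQ q = (p:ℝ) ^ lev q ∧
      ¬ ‖(Quotient.out q : ℚ_[p])‖ ≤ 1 := by
    intro q hq
    have hmk : QuotientAddGroup.mk (Quotient.out q) = q := Quotient.out_eq q
    have hq' : absQ q ≠ 0 := hq
    rw [← hmk, habsQ] at hq'
    by_cases h1 : ‖(Quotient.out q : ℚ_[p])‖ ≤ 1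
    · simp [h1] at hq'
    · have hy0 : (Quotient.out q : ℚ_[p]) ≠ 0 := by
        intro h0; rw [h0] at h1; simp at h1
      have hval := Padic.norm_eq_zpow_neg_valuation hy0
      have hvpos : 0 < -(Quotient.out q).valuation := by
        by_contra hcon
        push_neg at hcon
        have : ‖(Quotient.out q : ℚ_[p])‖ ≤ 1 := by
          rw [hval]
          calc (p:ℝ) ^ (-(Quotient.out q).valuation) ≤ (p:ℝ) ^ (0:ℤ) :=
            zpow_le_zpow_right₀ hplt.le hcon
          _ = 1 := by simp
        exact h1 this
      have habs : absQ q = ‖(Quotient.out q : ℚ_[p])‖ := by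
        have h := habsQ (Quotient.out q)
        rw [hmk] at h
        rw [h, if_neg h1]
      refine ⟨by simp only [hlev]; omega, ?_, h1⟩
      rw [habs, hval, hlev]
      simp only
      rw [← zpow_natCast, Int.toNat_of_nonneg hvpos.le]
  have hz : ∀ q : S, ‖(p:ℚ_[p]) ^ (lev q.1) * (Quotient.out q.1)‖ ≤ 1 := by
    intro q
    obtain ⟨h1, h2, h3⟩ := hlev_spec q.1 q.2
    rw [norm_mul, Padic.norm_p_pow]
    have hnrm : ‖(Quotient.out q.1 : ℚ_[p])‖ = (p:ℝ) ^ (lev q.1) := by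
      have hmk : QuotientAddGroup.mk (Quotient.out q.1) = q.1 := Quotient.out_eq _
      have h := habsQ (Quotient.out q.1)
      rw [hmk, if_neg h3] at h
      rw [← h, h2]
    rw [hnrm, ← zpow_natCast (p:ℝ) (lev q.1), ← zpow_add₀ (ne_of_gt hp0)]
    simp
  set Z : S → ℤ_[p] := fun q => ⟨(p:ℚ_[p]) ^ (lev q.1) * (Quotient.out q.1), hz q⟩ with hZ
  set ψ : S → ℕ × ℕ := fun q => (lev q.1, (PadicInt.toZModPow (lev q.1) (Z q)).val) with hψ
  have hψ_inj : Function.Injective ψ := by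
    intro q q' he
    have e1 : lev q.1 = lev q'.1 := congrArg Prod.fst he
    have e2 : (PadicInt.toZModPow (lev q.1) (Z q)).val
        = (PadicInt.toZModPow (lev q'.1) (Z q')).val := congrArg Prod.snd he
    rw [← e1] at e2
    haveI : NeZero (p ^ lev q.1) := ⟨pow_ne_zero _ (Fact.out : p.Prime).ne_zero⟩
    have e3 : PadicInt.toZModPow (lev q.1) (Z q)
        = PadicInt.toZModPow (lev q.1) (Z q') := ZMod.val_injective _ e2
    have e4 : Z q - Z q' ∈ RingHom.ker (PadicInt.toZModPow (lev q.1)) := by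
      rw [RingHom.mem_ker, map_sub, e3, sub_self]
    rw [PadicInt.ker_toZModPow, Ideal.mem_span_singleton] at e4
    obtain ⟨w, hw⟩ := e4
    have hw' : (p:ℚ_[p]) ^ (lev q.1) * (Quotient.out q.1)
        - (p:ℚ_[p]) ^ (lev q.1) * (Quotient.out q'.1)
        = (p:ℚ_[p]) ^ (lev q.1) * (w : ℚ_[p]) := by
      have := congrArg (fun z : ℤ_[p] => (z : ℚ_[p])) hw
      push_cast at this
      simpa [hZ, ← e1] using this
    have hpn0 : (p:ℚ_[p]) ^ (lev q.1) ≠ 0 := by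
      apply pow_ne_zero
      exact_mod_cast (Nat.cast_ne_zero (R := ℚ_[p])).mpr (Fact.out : p.Prime).ne_zero
    rw [← mul_sub] at hw'
    have hyy : (Quotient.out q.1 : ℚ_[p]) - Quotient.out q'.1 = (w : ℚ_[p]) :=
      mul_left_cancel₀ hpn0 hw'
    have hmem : -(Quotient.out q.1 : ℚ_[p]) + Quotient.out q'.1 ∈ ZpSub p := by
      change ‖-(Quotient.out q.1 : ℚ_[p]) + Quotient.out q'.1‖ ≤ 1
      have : -(Quotient.out q.1 : ℚ_[p]) + Quotient.out q'.1
          = -((Quotient.out q.1 : ℚ_[p]) - Quotient.out q'.1) := by ring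
      rw [this, norm_neg, hyy]
      exact w.2
    have hqq : (QuotientAddGroup.mk (Quotient.out q.1) : ℚ_[p] ⧸ ZpSub p)
        = QuotientAddGroup.mk (Quotient.out q'.1) := (QuotientAddGroup.eq).mpr hmem
    have o1 : QuotientAddGroup.mk (Quotient.out q.1) = q.1 := Quotient.out_eq _
    have o2 : QuotientAddGroup.mk (Quotient.out q'.1) = q'.1 := Quotient.out_eq _
    exact Subtype.ext (by rw [← o1, ← o2]; exact hqq)
  set G : ℕ × ℕ → ℝ := fun nj =>
    if 1 ≤ nj.1 ∧ nj.2 < p ^ nj.1 then K * Real.exp (-(c * Q ^ nj.1)) else 0 with hG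
  have hG_nonneg : ∀ nj, 0 ≤ G nj := by
    intro nj; rw [hG]; dsimp only; split
    · positivity
    · exact le_refl 0
  have hGrow : ∀ n, Summable (fun j => G (n, j)) := by
    intro n
    apply summable_of_ne_finset_zero (s := Finset.range (p ^ n))
    intro j hj
    rw [Finset.mem_range, not_lt] at hj
    rw [hG]; dsimp only
    rw [if_neg]
    push_neg
    intro _
    omega
  have hrowsum : ∀ n, ∑' j, G (n, j) ≤ (p:ℝ)^n * (K * Real.exp (-(c * Q ^ n))) := by
    intro n
    rw [tsum_eq_sum (s := Finset.range (p ^ n)) (by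
      intro j hj
      rw [Finset.mem_range, not_lt] at hj
      rw [hG]; dsimp only
      rw [if_neg]; push_neg; intro _; omega)]
    calc ∑ j ∈ Finset.range (p ^ n), G (n, j)
        ≤ ∑ _j ∈ Finset.range (p ^ n), K * Real.exp (-(c * Q ^ n)) := by
          apply Finset.sum_le_sum
          intro j _
          rw [hG]; dsimp only; split
          · exact le_refl _
          · positivity
      _ = (p:ℝ)^n * (K * Real.exp (-(c * Q ^ n))) := by
          rw [Finset.sum_const, Finset.card_range, nsmul_eq_mul]
          push_cast
          ring
  have hH : Summable (fun n : ℕ => (p:ℝ)^n * (K * Real.exp (-(c * Q ^ n)))) := by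
    apply summable_of_ratio_norm_eventually_le (r := 1/2) (by norm_num)
    have T0 : Tendsto (fun n : ℕ => c * (Q ^ n * (Q - 1))) atTop atTop :=
      Tendsto.const_mul_atTop hc
        ((tendsto_pow_atTop_atTop_of_one_lt hQ1).atTop_mul_const (by linarith))
    have T1 : Tendsto (fun n : ℕ => Real.exp (-(c * (Q ^ n * (Q - 1))))) atTop (nhds 0) :=
      Real.tendsto_exp_atBot.comp (tendsto_neg_atTop_atBot.comp T0)
    filter_upwards [T1.eventually_le_const (show (0:ℝ) < 1/(2*p) by positivity)] with n hn
    have hfn1 : (0:ℝ) ≤ (p:ℝ)^(n+1) * (K * Real.exp (-(c * Q ^ (n+1)))) := by positivity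
    have hfn : (0:ℝ) ≤ (p:ℝ)^n * (K * Real.exp (-(c * Q ^ n))) := by positivity
    rw [Real.norm_of_nonneg hfn1, Real.norm_of_nonneg hfn]
    have hexp : Real.exp (-(c * Q ^ (n+1)))
        = Real.exp (-(c * Q ^ n)) * Real.exp (-(c * (Q ^ n * (Q - 1)))) := by
      rw [← Real.exp_add]
      congr 1
      rw [pow_succ]
      ring
    rw [hexp, pow_succ]
    have key : (p:ℝ) * Real.exp (-(c * (Q ^ n * (Q - 1)))) ≤ 1/2 := by
      calc (p:ℝ) * Real.exp (-(c * (Q ^ n * (Q - 1)))) ≤ (p:ℝ) * (1/(2*p)) :=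
            mul_le_mul_of_nonneg_left hn hp0.le
        _ = 1/2 := by field_simp
    calc (p:ℝ)^n * (p:ℝ) * (K * (Real.exp (-(c * Q ^ n)) * Real.exp (-(c * (Q ^ n * (Q - 1))))))
        = ((p:ℝ) * Real.exp (-(c * (Q ^ n * (Q - 1))))) * ((p:ℝ)^n * (K * Real.exp (-(c * Q ^ n)))) := by
          ring
      _ ≤ (1/2) * ((p:ℝ)^n * (K * Real.exp (-(c * Q ^ n)))) :=
          mul_le_mul_of_nonneg_right key hfn
  have hGsum : Summable G := by
    rw [summable_prod_of_nonneg hG_nonneg]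
    exact ⟨hGrow, Summable.of_nonneg_of_le
      (fun n => tsum_nonneg fun j => hG_nonneg _) hrowsum hH⟩
  have hcomp : Summable (bound ∘ (Subtype.val : S → _)) := by
    have heq : bound ∘ (Subtype.val : S → _) = G ∘ ψ := by
      funext q
      obtain ⟨h1, h2, _⟩ := hlev_spec q.1 q.2
      haveI : NeZero (p ^ lev q.1) := ⟨pow_ne_zero _ (Fact.out : p.Prime).ne_zero⟩
      have hvallt : (PadicInt.toZModPow (lev q.1) (Z q)).val < p ^ lev q.1 :=
        ZMod.val_lt _
      have hpow : absQ q.1 ^ b = Q ^ (lev q.1) := by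
        rw [h2, ← Real.rpow_natCast (p:ℝ) (lev q.1), ← Real.rpow_natCast Q (lev q.1),
          ← Real.rpow_mul hp0.le, hQdef, ← Real.rpow_mul hp0.le, mul_comm]
      show bound q.1 = G (ψ q)
      rw [hbound, hG, hψ]
      dsimp only
      rw [if_neg q.2, if_pos ⟨h1, hvallt⟩, hpow]
    rw [heq]
    exact hGsum.comp_injective hψ_inj
  have hind : Summable (S.indicator bound) := summable_subtype_iff_indicator.mp hcomp
  rwa [Set.indicator_eq_self.mpr (by
    intro q hq
    simp only [Function.mem_support, hbound] at hq
    by_contra h0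
    simp only [hS, Set.mem_setOf_eq, not_not] at h0
    exact hq (by rw [if_pos h0]))] at hind

lemma stmt18_level {p : ℕ} [Fact p.Prime] (absQ : (ℚ_[p] ⧸ ZpSub p) → ℝ)
    (habsQ : ∀ y : ℚ_[p], absQ (QuotientAddGroup.mk y) = if ‖y‖ ≤ 1 then 0 else ‖y‖)
    (q : ℚ_[p] ⧸ ZpSub p) (hq : absQ q ≠ 0) :
    ∃ n : ℕ, 1 ≤ n ∧ absQ q = (p : ℝ) ^ n := by
  have hplt : (1:ℝ) < p := by exact_mod_cast (Fact.out : p.Prime).one_lt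
  have hmk : QuotientAddGroup.mk (Quotient.out q) = q := Quotient.out_eq q
  rw [← hmk, habsQ] at hq ⊢
  by_cases h1 : ‖(Quotient.out q : ℚ_[p])‖ ≤ 1
  · simp [h1] at hq
  · have hy0 : (Quotient.out q : ℚ_[p]) ≠ 0 := by
      intro h0; rw [h0] at h1; simp at h1
    have hval := Padic.norm_eq_zpow_neg_valuation hy0
    have hvpos : 0 < -(Quotient.out q).valuation := by
      by_contra hcon
      push_neg at hcon
      have : ‖(Quotient.out q : ℚ_[p])‖ ≤ 1 := by
        rw [hval]
        calc (p:ℝ) ^ (-(Quotient.out q).valuation) ≤ (p:ℝ) ^ (0:ℤ) :=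
          zpow_le_zpow_right₀ hplt.le hcon
        _ = 1 := by simp
      exact h1 this
    refine ⟨(-(Quotient.out q).valuation).toNat, by omega, ?_⟩
    rw [if_neg h1, hval, ← zpow_natCast, Int.toNat_of_nonneg hvpos.le]

end StmtAux

set_option maxHeartbeats 2000000

theorem stmt18 (p : ℕ) [Fact p.Prime] (b D : ℝ) (hb : 0 < b) (hD : 0 < D)
    (absQ : (ℚ_[p] ⧸ ZpSub p) → ℝ)
    (habsQ : ∀ y : ℚ_[p],
      absQ (QuotientAddGroup.mk y) = if ‖y‖ ≤ 1 then 0 else ‖y‖)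
    (t : ℝ) (ht : 0 < t) :
    Filter.Tendsto
      (fun m : ℕ =>
        ∑' q : ℚ_[p] ⧸ ZpSub p,
          |(if absQ q = 0 then (1 : ℝ)
            else if absQ q ≤ (p : ℝ) ^ (m : ℝ) then
              (((p : ℝ) ^ ((m : ℝ) * b) / ((p : ℝ) ^ ((m : ℝ) * b) - 1)) *
                  (1 - betaC p b * absQ q ^ b * (p : ℝ) ^ (-(m : ℝ) * b))) ^
                ⌊t * (D / betaC p b) * (p : ℝ) ^ ((m : ℝ) * b)⌋₊
            else 0) -
          (if absQ q = 0 then (1 : ℝ)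
            else Real.exp (-(D * (absQ q ^ b - (betaC p b)⁻¹) * t)))|)
      Filter.atTop (nhds 0) := by
  classical
  have hp2 : 2 ≤ p := (Fact.out : p.Prime).two_le
  have hp0 : (0:ℝ) < p := by positivity
  have hplt : (1:ℝ) < p := by exact_mod_cast (Fact.out : p.Prime).one_lt
  have hp2R : (2:ℝ) ≤ p := by exact_mod_cast hp2
  set Q : ℝ := (p:ℝ) ^ b with hQdef
  have hQ1 : 1 < Q := Real.one_lt_rpow_iff_of_pos hp0 |>.mpr (Or.inl ⟨hplt, hb⟩)
  have hQ0 : 0 < Q := lt_trans one_pos hQ1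
  have hQi0 : 0 < Q⁻¹ := by positivity
  have hQi1 : Q⁻¹ < 1 := by rw [inv_lt_one_iff₀]; right; exact hQ1
  have hQQi : Q⁻¹ * Q = 1 := inv_mul_cancel₀ (ne_of_gt hQ0)
  have hbeta_eq : betaC p b = (Q * p - 1)/(Q * ((p:ℝ) - 1)) := by
    simp only [betaC, ← hQdef]
    rw [Real.rpow_add hp0, Real.rpow_one]
  have hβden : 0 < Q * ((p:ℝ) - 1) := by nlinarith
  have hβ1 : 1 < betaC p b := by
    rw [hbeta_eq, lt_div_iff₀ hβden]
    nlinarith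
  have hβ2 : betaC p b ≤ 2 - Q⁻¹ := by
    rw [hbeta_eq, div_le_iff₀ hβden]
    nlinarith [mul_nonneg (by linarith : (0:ℝ) ≤ Q - 1) (by linarith : (0:ℝ) ≤ (p:ℝ) - 2)]
  set β : ℝ := betaC p b with hβdef
  have hβ0 : 0 < β := lt_trans one_pos hβ1
  set x : ℝ := t * (D / β) with hxdef
  have hx : 0 < x := mul_pos ht (div_pos hD hβ0)
  set c' : ℝ := min (x * (β - Q⁻¹) / 2)
      (x / 2 * (-Real.log (max (3/4) (1 - Q⁻¹/2)))) with hc'def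
  have hq₀0 : (0:ℝ) < max (3/4) (1 - Q⁻¹/2) := lt_of_lt_of_le (by norm_num) (le_max_left _ _)
  have hq₀1 : max (3/4) (1 - Q⁻¹/2) < 1 := by
    rw [max_lt_iff]; exact ⟨by norm_num, by linarith⟩
  have hc'0 : 0 < c' := by
    apply lt_min
    · have : 0 < β - Q⁻¹ := by linarith
      positivity
    · have : 0 < -Real.log (max (3/4) (1 - Q⁻¹/2)) := by
        have := Real.log_neg hq₀0 hq₀1
        linarith
      positivity
  set c : ℝ := min c' (D * t) with hcdef
  have hc0 : 0 < c := lt_min hc'0 (by positivity)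
  set K : ℝ := 2 * Real.exp (D * β⁻¹ * t) with hKdef
  have hK : 0 ≤ K := by positivity
  have hexp1 : 1 ≤ Real.exp (D * β⁻¹ * t) := Real.one_le_exp (by positivity)
  have hsum := stmt18_summable_bound absQ habsQ b c K hb hc0 hK
  have hPt : Filter.Tendsto (fun m : ℕ => Q ^ m) Filter.atTop Filter.atTop :=
    tendsto_pow_atTop_atTop_of_one_lt hQ1
  have hPeq : ∀ m : ℕ, (p:ℝ) ^ ((m:ℝ) * b) = Q ^ m := by
    intro m
    rw [mul_comm, Real.rpow_mul hp0.le, hQdef, Real.rpow_natCast]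
  have hPinv : ∀ m : ℕ, (p:ℝ) ^ (-(m:ℝ) * b) = (Q ^ m)⁻¹ := by
    intro m
    rw [neg_mul, Real.rpow_neg hp0.le, hPeq]
  -- gather level data
  have hlevel : ∀ q : ℚ_[p] ⧸ ZpSub p, absQ q ≠ 0 →
      0 < absQ q ∧ Q ≤ absQ q ^ b := by
    intro q h0
    obtain ⟨n, hn1, hn2⟩ := stmt18_level absQ habsQ q h0
    have hqpos : 0 < absQ q := by rw [hn2]; positivity
    have hA_eq : absQ q ^ b = Q ^ n := by
      rw [hn2, ← Real.rpow_natCast (p:ℝ) n, ← Real.rpow_natCast Q n,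
        ← Real.rpow_mul hp0.le, hQdef, ← Real.rpow_mul hp0.le, mul_comm]
    refine ⟨hqpos, ?_⟩
    rw [hA_eq]
    exact le_self_pow₀ hQ1.le (by omega)
  -- pointwise convergence
  have hpt : ∀ q : ℚ_[p] ⧸ ZpSub p,
      Filter.Tendsto (fun m : ℕ =>
        |(if absQ q = 0 then (1 : ℝ)
          else if absQ q ≤ (p : ℝ) ^ (m : ℝ) then
            (((p : ℝ) ^ ((m : ℝ) * b) / ((p : ℝ) ^ ((m : ℝ) * b) - 1)) *
                (1 - β * absQ q ^ b * (p : ℝ) ^ (-(m : ℝ) * b))) ^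
              ⌊x * (p : ℝ) ^ ((m : ℝ) * b)⌋₊
          else 0) -
        (if absQ q = 0 then (1 : ℝ)
          else Real.exp (-(D * (absQ q ^ b - β⁻¹) * t)))|)
      Filter.atTop (nhds 0) := by
    intro q
    by_cases h0 : absQ q = 0
    · simp only [if_pos h0, sub_self, abs_zero]
      exact tendsto_const_nhds
    · obtain ⟨hqpos, hAQ⟩ := hlevel q h0
      set A : ℝ := absQ q ^ b with hAdef
      have hA1 : 1 < A := lt_of_lt_of_le hQ1 hAQ
      have hlim0 := stmt18_pointwise_lim (β := β) (x := x) (A := A) hβ1 hx hA1 hPt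
      have hgval : Real.exp (-(x * (β * A - 1))) = Real.exp (-(D * (A - β⁻¹) * t)) := by
        have h1 : β⁻¹ * β = 1 := inv_mul_cancel₀ (ne_of_gt hβ0)
        congr 1
        rw [hxdef]
        linear_combination (-(t*D*A)) * h1
      have h := (hlim0.sub_const (Real.exp (-(D * (A - β⁻¹) * t)))).abs
      rw [hgval, sub_self, abs_zero] at h
      apply h.congr'
      filter_upwards [(tendsto_pow_atTop_atTop_of_one_lt hplt).eventually_ge_atTop (absQ q)]
        with m hm
      have hle : absQ q ≤ (p:ℝ) ^ (m:ℝ) := by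
        rw [Real.rpow_natCast]; exact hm
      simp only [if_neg h0, if_pos hle]
      rw [hPeq m, hPinv m, ← div_eq_mul_inv]
  -- uniform domination
  have hbd : ∀ᶠ m : ℕ in Filter.atTop, ∀ q : ℚ_[p] ⧸ ZpSub p,
      ‖(|(if absQ q = 0 then (1 : ℝ)
          else if absQ q ≤ (p : ℝ) ^ (m : ℝ) then
            (((p : ℝ) ^ ((m : ℝ) * b) / ((p : ℝ) ^ ((m : ℝ) * b) - 1)) *
                (1 - β * absQ q ^ b * (p : ℝ) ^ (-(m : ℝ) * b))) ^
              ⌊x * (p : ℝ) ^ ((m : ℝ) * b)⌋₊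
          else 0) -
        (if absQ q = 0 then (1 : ℝ)
          else Real.exp (-(D * (absQ q ^ b - β⁻¹) * t)))|)‖
      ≤ (if absQ q = 0 then (0:ℝ) else K * Real.exp (-(c * absQ q ^ b))) := by
    have hPm1 : Filter.Tendsto (fun m : ℕ => Q ^ m - 1) Filter.atTop Filter.atTop :=
      Filter.tendsto_atTop_add_const_right _ (-1) hPt
    have hrat : Filter.Tendsto (fun m : ℕ => Q ^ m / (Q ^ m - 1)) Filter.atTop (nhds 1) := by
      have h1 : Filter.Tendsto (fun m : ℕ => 1 + 1/(Q ^ m - 1)) Filter.atTop (nhds (1 + 0)) :=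
        tendsto_const_nhds.add (Filter.Tendsto.div_atTop tendsto_const_nhds hPm1)
      rw [add_zero] at h1
      apply h1.congr'
      filter_upwards [hPt.eventually_gt_atTop 1] with m hm
      have hne : Q ^ m - 1 ≠ 0 := by intro h; rw [sub_eq_zero] at h; exact (ne_of_gt hm) h
      field_simp
      ring
    have hthird : Filter.Tendsto (fun m : ℕ => (1 - Q⁻¹) * (Q ^ m / (Q ^ m - 1)))
        Filter.atTop (nhds ((1 - Q⁻¹) * 1)) := hrat.const_mul _
    filter_upwards [hPt.eventually_ge_atTop 3,
      (Filter.Tendsto.const_mul_atTop hx hPt).eventually_ge_atTop 2,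
      hthird.eventually_le_const (by rw [mul_one]; linarith : (1 - Q⁻¹) * 1 < 1 - Q⁻¹/2)]
      with m hm3 hmx hm4
    intro q
    by_cases h0 : absQ q = 0
    · simp only [if_pos h0, sub_self, abs_zero, norm_zero]
      exact le_refl 0
    · obtain ⟨hqpos, hAQ⟩ := hlevel q h0
      rw [Real.norm_eq_abs, abs_abs]
      simp only [if_neg h0]
      set A : ℝ := absQ q ^ b with hAdef
      have hA0 : (0:ℝ) < A := lt_of_lt_of_le hQ0 hAQ
      have hgsplit : Real.exp (-(D * (A - β⁻¹) * t))
          = Real.exp (D * β⁻¹ * t) * Real.exp (-(D * t * A)) := by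
        rw [← Real.exp_add]
        congr 1
        ring
      have hgle : Real.exp (-(D * (A - β⁻¹) * t))
          ≤ Real.exp (D * β⁻¹ * t) * Real.exp (-(c * A)) := by
        rw [hgsplit]
        apply mul_le_mul_of_nonneg_left _ (Real.exp_nonneg _)
        apply Real.exp_le_exp.mpr
        have hcDt : c ≤ D * t := min_le_right _ _
        nlinarith
      by_cases hle : absQ q ≤ (p:ℝ) ^ (m:ℝ)
      · rw [if_pos hle]
        have hA2 : A ≤ Q ^ m := by
          calc A ≤ ((p:ℝ) ^ (m:ℝ)) ^ b := Real.rpow_le_rpow hqpos.le hle hb.le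
            _ = Q ^ m := by rw [← Real.rpow_mul hp0.le, hPeq m]
        have hbnd := stmt18_unif_bound hQ1 hβ1 hβ2 hx hm3 hmx hm4 hAQ hA2
        rw [← hc'def] at hbnd
        rw [hPeq m, hPinv m, ← div_eq_mul_inv]
        have h1 := abs_sub (((Q ^ m / (Q ^ m - 1)) * (1 - β * A / Q ^ m)) ^ ⌊x * Q ^ m⌋₊)
          (Real.exp (-(D * (A - β⁻¹) * t)))
        have h3 : Real.exp (-(c' * A)) ≤ Real.exp (-(c * A)) := by
          apply Real.exp_le_exp.mpr
          have hcc' : c ≤ c' := min_le_left _ _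
          nlinarith
        have h4 : Real.exp (-(c * A)) ≤ Real.exp (D * β⁻¹ * t) * Real.exp (-(c * A)) :=
          le_mul_of_one_le_left (Real.exp_nonneg _) hexp1
        have h5 : |Real.exp (-(D * (A - β⁻¹) * t))| = Real.exp (-(D * (A - β⁻¹) * t)) :=
          Real.abs_exp _
        rw [hKdef]
        linarith
      · rw [if_neg hle]
        rw [zero_sub, abs_neg, Real.abs_exp]
        calc Real.exp (-(D * (A - β⁻¹) * t))
            ≤ Real.exp (D * β⁻¹ * t) * Real.exp (-(c * A)) := hgle
          _ ≤ K * Real.exp (-(c * A)) := by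
              rw [hKdef]
              nlinarith [Real.exp_pos (-(c * A)), Real.exp_pos (D * β⁻¹ * t)]
  have hmain := tendsto_tsum_of_dominated_convergence
    (𝓕 := (Filter.atTop : Filter ℕ))
    (f := fun (m : ℕ) (q : ℚ_[p] ⧸ ZpSub p) =>
      |(if absQ q = 0 then (1 : ℝ)
        else if absQ q ≤ (p : ℝ) ^ (m : ℝ) then
          (((p : ℝ) ^ ((m : ℝ) * b) / ((p : ℝ) ^ ((m : ℝ) * b) - 1)) *
              (1 - β * absQ q ^ b * (p : ℝ) ^ (-(m : ℝ) * b))) ^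
            ⌊x * (p : ℝ) ^ ((m : ℝ) * b)⌋₊
        else 0) -
      (if absQ q = 0 then (1 : ℝ)
        else Real.exp (-(D * (absQ q ^ b - β⁻¹) * t)))|)
    (g := fun _ => (0:ℝ)) hsum hpt hbd
  rw [tsum_zero] at hmain
  exact hmain
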